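/- arXiv:math/0111303 — 13 statements merged into one kernel-verified Lean document; each statement's English description precedes it below -/
import Mathlib

section
/- Let (a1,a2,a3,a4,a5) = (2,3,11,17,23). For every vector p = (p1,...,p5) of nonnegative integers with p1+p2+p3+p4+p5 ≥ 2 (equivalently, p is neither zero nor a standard basis vector), one has p1+p2+p3+p4+p5 ≥ min(2·p1, 3·p2, 11·p3, 17·p4, 23·p5) + 2; equivalently, the toric discrepancy a_p = Σ_i p_i − min_i(a_i·p_i) − 1 is at least 1. -/
theorem toric_discrepancy_2_3_11_17_23
    (p₁ p₂ p₃ p₄ p₅ : ℕ) (h : 2 ≤ p₁ + p₂ + p₃ + p₄ + p₅) :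
    min (min (min (min (2 * p₁) (3 * p₂)) (11 * p₃)) (17 * p₄)) (23 * p₅) + 2 ≤
      p₁ + p₂ + p₃ + p₄ + p₅ := by
  set m := min (min (min (min (2 * p₁) (3 * p₂)) (11 * p₃)) (17 * p₄)) (23 * p₅) with hm
  have h1 : m ≤ 2 * p₁ := le_trans (min_le_left _ _) (le_trans (min_le_left _ _)
    (le_trans (min_le_left _ _) (min_le_left _ _)))
  have h2 : m ≤ 3 * p₂ := le_trans (min_le_left _ _) (le_trans (min_le_left _ _)
    (le_trans (min_le_left _ _) (min_le_right _ _)))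
  have h3 : m ≤ 11 * p₃ := le_trans (min_le_left _ _) (le_trans (min_le_left _ _)
    (min_le_right _ _))
  have h4 : m ≤ 17 * p₄ := le_trans (min_le_left _ _) (min_le_right _ _)
  have h5 : m ≤ 23 * p₅ := min_le_right _ _
  clear_value m
  rcases le_or_gt m 75 with hs | hl
  · interval_cases m <;> omega
  · have key : 26491 * m ≤ 25806 * (p₁ + p₂ + p₃ + p₄ + p₅) := by linarith
    omega
end

section
/- Let (a1,a2,a3,a4,a5) = (2,3,11,17,25). For every vector p = (p1,...,p5) of nonnegative integers with p1+p2+p3+p4+p5 ≥ 2 (equivalently, p is neither zero nor a standard basis vector), one has p1+p2+p3+p4+p5 ≥ min(2·p1, 3·p2, 11·p3, 17·p4, 25·p5) + 2; equivalently, the toric discrepancy a_p = Σ_i p_i − min_i(a_i·p_i) − 1 is at least 1. -/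
theorem toric_discrepancy_2_3_11_17_25
    (p₁ p₂ p₃ p₄ p₅ : ℕ) (h : 2 ≤ p₁ + p₂ + p₃ + p₄ + p₅) :
    min (min (min (min (2 * p₁) (3 * p₂)) (11 * p₃)) (17 * p₄)) (25 * p₅) + 2 ≤
      p₁ + p₂ + p₃ + p₄ + p₅ := by
  set m := min (min (min (min (2 * p₁) (3 * p₂)) (11 * p₃)) (17 * p₄)) (25 * p₅) with hm
  have h5 : m ≤ 25 * p₅ := min_le_right _ _
  have h4 : m ≤ 17 * p₄ := le_trans (min_le_left _ _) (min_le_right _ _)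
  have h3 : m ≤ 11 * p₃ :=
    le_trans (min_le_left _ _) (le_trans (min_le_left _ _) (min_le_right _ _))
  have h2 : m ≤ 3 * p₂ :=
    le_trans (min_le_left _ _)
      (le_trans (min_le_left _ _) (le_trans (min_le_left _ _) (min_le_right _ _)))
  have h1 : m ≤ 2 * p₁ :=
    le_trans (min_le_left _ _)
      (le_trans (min_le_left _ _) (le_trans (min_le_left _ _) (min_le_left _ _)))
  clear_value m
  rcases le_or_gt m 86 with hmc | hmc
  · interval_cases m <;> omega
  · omega
end

section
/- Let (a1,a2,a3,a4,a5) = (2,3,11,17,29). For every vector p = (p1,...,p5) of nonnegative integers with p1+p2+p3+p4+p5 ≥ 2 (equivalently, p is neither zero nor a standard basis vector), one has p1+p2+p3+p4+p5 ≥ min(2·p1, 3·p2, 11·p3, 17·p4, 29·p5) + 2; equivalently, the toric discrepancy a_p = Σ_i p_i − min_i(a_i·p_i) − 1 is at least 1. -/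
private lemma case1 (a b c d e : ℕ) (h : 2 ≤ a+b+c+d+e) (h2 : 2*a ≤ 3*b)
    (h3 : 2*a ≤ 11*c) (h4 : 2*a ≤ 17*d) (h5 : 2*a ≤ 29*e) :
    2*a + 2 ≤ a+b+c+d+e := by
  rcases le_or_gt a 60 with ha | ha
  · interval_cases a <;> omega
  · linarith

private lemma case2 (a b c d e : ℕ) (h : 2 ≤ a+b+c+d+e) (h2 : 3*b ≤ 2*a)
    (h3 : 3*b ≤ 11*c) (h4 : 3*b ≤ 17*d) (h5 : 3*b ≤ 29*e) :
    3*b + 2 ≤ a+b+c+d+e := by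
  rcases le_or_gt b 45 with hb | hb
  · interval_cases b <;> omega
  · linarith

private lemma case3 (a b c d e : ℕ) (h : 2 ≤ a+b+c+d+e) (h2 : 11*c ≤ 2*a)
    (h3 : 11*c ≤ 3*b) (h4 : 11*c ≤ 17*d) (h5 : 11*c ≤ 29*e) :
    11*c + 2 ≤ a+b+c+d+e := by
  rcases le_or_gt c 15 with hc | hc
  · interval_cases c <;> omega
  · linarith

private lemma case4 (a b c d e : ℕ) (h : 2 ≤ a+b+c+d+e) (h2 : 17*d ≤ 2*a)
    (h3 : 17*d ≤ 3*b) (h4 : 17*d ≤ 11*c) (h5 : 17*d ≤ 29*e) :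
    17*d + 2 ≤ a+b+c+d+e := by
  rcases le_or_gt d 10 with hd | hd
  · interval_cases d <;> omega
  · linarith

private lemma case5 (a b c d e : ℕ) (h : 2 ≤ a+b+c+d+e) (h2 : 29*e ≤ 2*a)
    (h3 : 29*e ≤ 3*b) (h4 : 29*e ≤ 11*c) (h5 : 29*e ≤ 17*d) :
    29*e + 2 ≤ a+b+c+d+e := by
  rcases le_or_gt e 6 with he | he
  · interval_cases e <;> omega
  · linarith

theorem toric_discrepancy_2_3_11_17_29
    (p₁ p₂ p₃ p₄ p₅ : ℕ) (h : 2 ≤ p₁ + p₂ + p₃ + p₄ + p₅) :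
    min (min (min (min (2 * p₁) (3 * p₂)) (11 * p₃)) (17 * p₄)) (29 * p₅) + 2 ≤
      p₁ + p₂ + p₃ + p₄ + p₅ := by
  simp only [min_def]
  split_ifs <;>
  first
    | exact case1 p₁ p₂ p₃ p₄ p₅ h (by omega) (by omega) (by omega) (by omega)
    | exact case2 p₁ p₂ p₃ p₄ p₅ h (by omega) (by omega) (by omega) (by omega)
    | exact case3 p₁ p₂ p₃ p₄ p₅ h (by omega) (by omega) (by omega) (by omega)
    | exact case4 p₁ p₂ p₃ p₄ p₅ h (by omega) (by omega) (by omega) (by omega)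
    | exact case5 p₁ p₂ p₃ p₄ p₅ h (by omega) (by omega) (by omega) (by omega)
end

section
/- Let (a1,a2,a3,a4,a5) = (2,5,7,9,11). For every vector p = (p1,...,p5) of nonnegative integers with p1+p2+p3+p4+p5 ≥ 2 (equivalently, p is neither zero nor a standard basis vector), one has p1+p2+p3+p4+p5 ≥ min(2·p1, 5·p2, 7·p3, 9·p4, 11·p5) + 2; equivalently, the toric discrepancy a_p = Σ_i p_i − min_i(a_i·p_i) − 1 is at least 1. -/
theorem toric_discrepancy_2_5_7_9_11
    (p₁ p₂ p₃ p₄ p₅ : ℕ) (h : 2 ≤ p₁ + p₂ + p₃ + p₄ + p₅) :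
    min (min (min (min (2 * p₁) (5 * p₂)) (7 * p₃)) (9 * p₄)) (11 * p₅) + 2 ≤
      p₁ + p₂ + p₃ + p₄ + p₅ := by
  set M := min (min (min (min (2 * p₁) (5 * p₂)) (7 * p₃)) (9 * p₄)) (11 * p₅) with hM
  have hc : M = 2*p₁ ∨ M = 5*p₂ ∨ M = 7*p₃ ∨ M = 9*p₄ ∨ M = 11*p₅ := by omega
  have h1 : M ≤ 2*p₁ := by omega
  have h2 : M ≤ 5*p₂ := by omega
  have h3 : M ≤ 7*p₃ := by omega
  have h4 : M ≤ 9*p₄ := by omega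
  have h5 : M ≤ 11*p₅ := by omega
  clear_value M
  clear hM
  rcases hc with hc | hc | hc | hc | hc
  · rcases Nat.lt_or_ge p₁ 23 with hs | hs
    · interval_cases p₁ <;> omega
    · omega
  · rcases Nat.lt_or_ge p₂ 9 with hs | hs
    · interval_cases p₂ <;> omega
    · omega
  · rcases Nat.lt_or_ge p₃ 7 with hs | hs
    · interval_cases p₃ <;> omega
    · omega
  · rcases Nat.lt_or_ge p₄ 5 with hs | hs
    · interval_cases p₄ <;> omega
    · omega
  · rcases Nat.lt_or_ge p₅ 5 with hs | hs
    · interval_cases p₅ <;> omega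
    · omega
end

section
/- For every integer d ≥ 1, ⌈d/2⌉ + ⌈d/3⌉ + ⌈d/11⌉ + ⌈d/17⌉ + ⌈d/19⌉ ≥ d + 2. -/
lemma ceil_int_div (a d : ℤ) (ha : 0 < a) : ⌈(d : ℚ) / (a : ℚ)⌉ = (d + a - 1) / a := by
  have haQ : (0 : ℚ) < (a : ℚ) := by exact_mod_cast ha
  rw [Int.ceil_eq_iff]
  set q := (d + a - 1) / a with hq
  have hmod := Int.mul_ediv_add_emod (d + a - 1) a
  have h1 : 0 ≤ (d + a - 1) % a := Int.emod_nonneg _ (ne_of_gt ha)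
  have h2 : (d + a - 1) % a < a := Int.emod_lt_of_pos _ ha
  constructor
  · rw [lt_div_iff₀ haQ]
    have : (q - 1) * a < d := by nlinarith [hmod]
    calc ((q : ℚ) - 1) * a = ((q - 1) * a : ℤ) := by push_cast; ring
      _ < d := by exact_mod_cast this
  · rw [div_le_iff₀ haQ]
    have : d ≤ q * a := by nlinarith [hmod]
    calc (d : ℚ) ≤ ((q * a : ℤ) : ℚ) := by exact_mod_cast this
      _ = (q : ℚ) * a := by push_cast; ring

lemma div_sum_bound (d : ℤ) (hd : 1 ≤ d) :
    d + 2 ≤ (d+1)/2 + (d+2)/3 + (d+10)/11 + (d+16)/17 + (d+18)/19 := by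
  rcases le_or_gt d 698 with h | h
  · interval_cases d <;> decide
  · have h2 : d ≤ 2 * ((d+1)/2) := by omega
    have h3 : d ≤ 3 * ((d+2)/3) := by omega
    have h11 : d ≤ 11 * ((d+10)/11) := by omega
    have h17 : d ≤ 17 * ((d+16)/17) := by omega
    have h19 : d ≤ 19 * ((d+18)/19) := by omega
    linarith

theorem ceil_sum_ge_2_3_11_17_19 (d : ℤ) (hd : 1 ≤ d) :
    d + 2 ≤ ⌈(d : ℚ) / 2⌉ + ⌈(d : ℚ) / 3⌉ + ⌈(d : ℚ) / 11⌉ + ⌈(d : ℚ) / 17⌉ + ⌈(d : ℚ) / 19⌉ := by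
  have h2 := ceil_int_div 2 d (by norm_num)
  have h3 := ceil_int_div 3 d (by norm_num)
  have h11 := ceil_int_div 11 d (by norm_num)
  have h17 := ceil_int_div 17 d (by norm_num)
  have h19 := ceil_int_div 19 d (by norm_num)
  push_cast at h2 h3 h11 h17 h19
  rw [h2, h3, h11, h17, h19]
  have := div_sum_bound d hd
  omega
end

section
/- For every integer d ≥ 1, ⌈d/2⌉ + ⌈d/3⌉ + ⌈d/11⌉ + ⌈d/17⌉ + ⌈d/23⌉ ≥ d + 2. -/
lemma ceil_div_aux (n : ℤ) (m : ℕ) : ⌈(n : ℚ) / (m : ℚ)⌉ = -((-n) / (m : ℤ)) := by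
  rw [← neg_inj, ← Int.floor_neg, ← Rat.floor_intCast_div_natCast (-n) m, neg_neg]
  push_cast
  ring_nf

theorem ceil_sum_ge_2_3_11_17_23 (d : ℤ) (hd : 1 ≤ d) :
    d + 2 ≤ ⌈(d : ℚ) / 2⌉ + ⌈(d : ℚ) / 3⌉ + ⌈(d : ℚ) / 11⌉ + ⌈(d : ℚ) / 17⌉ + ⌈(d : ℚ) / 23⌉ := by
  have h2 : ⌈(d : ℚ) / 2⌉ = -((-d) / 2) := by
    rw [show (2 : ℚ) = ((2 : ℕ) : ℚ) by norm_num]; exact ceil_div_aux d 2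
  have h3 : ⌈(d : ℚ) / 3⌉ = -((-d) / 3) := by
    rw [show (3 : ℚ) = ((3 : ℕ) : ℚ) by norm_num]; exact ceil_div_aux d 3
  have h11 : ⌈(d : ℚ) / 11⌉ = -((-d) / 11) := by
    rw [show (11 : ℚ) = ((11 : ℕ) : ℚ) by norm_num]; exact ceil_div_aux d 11
  have h17 : ⌈(d : ℚ) / 17⌉ = -((-d) / 17) := by
    rw [show (17 : ℚ) = ((17 : ℕ) : ℚ) by norm_num]; exact ceil_div_aux d 17
  have h23 : ⌈(d : ℚ) / 23⌉ = -((-d) / 23) := by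
    rw [show (23 : ℚ) = ((23 : ℕ) : ℚ) by norm_num]; exact ceil_div_aux d 23
  rw [h2, h3, h11, h17, h23]
  rcases lt_or_ge d 38 with h | h
  · interval_cases d <;> decide
  · have b2 : 2 * (-((-d) / 2)) ≥ d := by omega
    have b3 : 3 * (-((-d) / 3)) ≥ d := by omega
    have b11 : 11 * (-((-d) / 11)) ≥ d := by omega
    have b17 : 17 * (-((-d) / 17)) ≥ d := by omega
    have b23 : 23 * (-((-d) / 23)) ≥ d := by omega
    -- sum ≥ d*(1/2+1/3+1/11+1/17+1/23) = 26491d/25806 ; need > d+1 for d ≥ 38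
    nlinarith [b2, b3, b11, b17, b23]
end

section
/- For every integer d ≥ 1, ⌈d/2⌉ + ⌈d/3⌉ + ⌈d/11⌉ + ⌈d/17⌉ + ⌈d/25⌉ ≥ d + 2. -/
lemma ceil_int_div_aux (n : ℤ) (b : ℕ) : ⌈(n:ℚ)/(b:ℚ)⌉ = -((-n)/(b:ℤ)) := by
  rw [← Rat.floor_intCast_div_natCast (-n) b, ← neg_neg ⌈(n:ℚ)/(b:ℚ)⌉, ← Int.floor_neg]
  congr 2
  push_cast
  ring

theorem ceil_sum_ge_2_3_11_17_25 (d : ℤ) (hd : 1 ≤ d) :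
    d + 2 ≤ ⌈(d : ℚ) / 2⌉ + ⌈(d : ℚ) / 3⌉ + ⌈(d : ℚ) / 11⌉ + ⌈(d : ℚ) / 17⌉ + ⌈(d : ℚ) / 25⌉ := by
  rcases le_or_gt d 86 with h | h
  · have h2 := ceil_int_div_aux d 2
    have h3 := ceil_int_div_aux d 3
    have h11 := ceil_int_div_aux d 11
    have h17 := ceil_int_div_aux d 17
    have h25 := ceil_int_div_aux d 25
    norm_num at h2 h3 h11 h17 h25
    rw [h2, h3, h11, h17, h25]
    interval_cases d <;> decide
  · have h1 := Int.le_ceil ((d : ℚ) / 2)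
    have h2 := Int.le_ceil ((d : ℚ) / 3)
    have h3 := Int.le_ceil ((d : ℚ) / 11)
    have h4 := Int.le_ceil ((d : ℚ) / 17)
    have h5 := Int.le_ceil ((d : ℚ) / 25)
    have hq : (87 : ℚ) ≤ (d : ℚ) := by exact_mod_cast h
    have : ((d : ℤ) + 2 : ℚ) ≤ ((⌈(d : ℚ) / 2⌉ + ⌈(d : ℚ) / 3⌉ + ⌈(d : ℚ) / 11⌉ + ⌈(d : ℚ) / 17⌉ + ⌈(d : ℚ) / 25⌉ : ℤ) : ℚ) := by
      push_cast
      nlinarith [h1, h2, h3, h4, h5, hq]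
    exact_mod_cast this
end

section
/- For every integer d ≥ 1, ⌈d/2⌉ + ⌈d/3⌉ + ⌈d/11⌉ + ⌈d/17⌉ + ⌈d/29⌉ ≥ d + 2. -/
lemma ceil_div_eq (d a : ℤ) (ha : 0 < a) : ⌈(d : ℚ) / (a:ℚ)⌉ = (d + a - 1) / a := by
  have haq : (0:ℚ) < (a:ℚ) := by exact_mod_cast ha
  have hdm := Int.mul_ediv_add_emod (d + a - 1) a
  have hr0 := Int.emod_nonneg (d + a - 1) ha.ne'
  have hr1 := Int.emod_lt_of_pos (d + a - 1) ha
  have hle : a * ((d + a - 1) / a) ≤ d + a - 1 := by linarith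
  have hgt : d - 1 < a * ((d + a - 1) / a) := by linarith
  rw [Int.ceil_eq_iff]
  constructor
  · rw [lt_div_iff₀ haq]
    have h1 : a * ((d + a - 1) / a - 1) < d := by nlinarith
    have h2 : ((a:ℚ)) * (((d + a - 1) / a : ℤ) - 1) < (d:ℚ) := by exact_mod_cast h1
    nlinarith [h2]
  · rw [div_le_iff₀ haq]
    have h1 : d ≤ a * ((d + a - 1) / a) := by linarith
    have h2 : (d:ℚ) ≤ ((a:ℚ)) * (((d + a - 1) / a : ℤ)) := by exact_mod_cast h1
    nlinarith [h2]

theorem ceil_sum_ge_2_3_11_17_29 (d : ℤ) (hd : 1 ≤ d) :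
    d + 2 ≤ ⌈(d : ℚ) / 2⌉ + ⌈(d : ℚ) / 3⌉ + ⌈(d : ℚ) / 11⌉ + ⌈(d : ℚ) / 17⌉ + ⌈(d : ℚ) / 29⌉ := by
  have h2 := ceil_div_eq d 2 (by norm_num)
  have h3 := ceil_div_eq d 3 (by norm_num)
  have h11 := ceil_div_eq d 11 (by norm_num)
  have h17 := ceil_div_eq d 17 (by norm_num)
  have h29 := ceil_div_eq d 29 (by norm_num)
  push_cast at h2 h3 h11 h17 h29
  rw [h2, h3, h11, h17, h29]
  rcases lt_or_ge d 114 with h | h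
  · interval_cases d <;> decide
  · have c2 : 2 * ((d + 2 - 1) / 2) ≥ d := by omega
    have c3 : 3 * ((d + 3 - 1) / 3) ≥ d := by omega
    have c11 : 11 * ((d + 11 - 1) / 11) ≥ d := by omega
    have c17 : 17 * ((d + 17 - 1) / 17) ≥ d := by omega
    have c29 : 29 * ((d + 29 - 1) / 29) ≥ d := by omega
    nlinarith [c2, c3, c11, c17, c29, h]
end

section
/- For every integer d ≥ 1, ⌈d/2⌉ + ⌈d/5⌉ + ⌈d/7⌉ + ⌈d/9⌉ + ⌈d/11⌉ ≥ d + 2. -/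
lemma ceil_div_nat_aux (a : ℤ) (n : ℕ) : ⌈(a : ℚ) / (n : ℚ)⌉ = -((-a) / (n : ℤ)) := by
  rw [← neg_neg ⌈(a : ℚ) / (n : ℚ)⌉, ← Int.floor_neg, ← neg_div, ← Int.cast_neg,
    Rat.floor_intCast_div_natCast]

theorem ceil_sum_ge_2_5_7_9_11 (d : ℤ) (hd : 1 ≤ d) :
    d + 2 ≤ ⌈(d : ℚ) / 2⌉ + ⌈(d : ℚ) / 5⌉ + ⌈(d : ℚ) / 7⌉ + ⌈(d : ℚ) / 9⌉ + ⌈(d : ℚ) / 11⌉ := by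
  rcases le_or_gt 45 d with h | h
  · have h2 := Int.le_ceil ((d : ℚ) / 2)
    have h5 := Int.le_ceil ((d : ℚ) / 5)
    have h7 := Int.le_ceil ((d : ℚ) / 7)
    have h9 := Int.le_ceil ((d : ℚ) / 9)
    have h11 := Int.le_ceil ((d : ℚ) / 11)
    have hd' : (45 : ℚ) ≤ (d : ℚ) := by exact_mod_cast h
    have : ((d + 2 : ℤ) : ℚ) ≤ ((⌈(d : ℚ) / 2⌉ + ⌈(d : ℚ) / 5⌉ + ⌈(d : ℚ) / 7⌉ + ⌈(d : ℚ) / 9⌉ +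
        ⌈(d : ℚ) / 11⌉ : ℤ) : ℚ) := by
      push_cast
      linarith
    exact_mod_cast this
  · have h2 := ceil_div_nat_aux d 2
    have h5 := ceil_div_nat_aux d 5
    have h7 := ceil_div_nat_aux d 7
    have h9 := ceil_div_nat_aux d 9
    have h11 := ceil_div_nat_aux d 11
    norm_num at h2 h5 h7 h9 h11
    rw [h2, h5, h7, h9, h11]
    interval_cases d <;> decide
end

section
/- For every integer d ≥ 1, ⌈d/2⌉ + ⌈d/5⌉ + ⌈d/7⌉ + ⌈d/9⌉ + ⌈d/13⌉ ≥ d + 2. -/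
lemma ceil_div_nat_eq (d : ℤ) (n : ℕ) : ⌈(d : ℚ) / (n : ℚ)⌉ = -((-d) / (n : ℤ)) := by
  rw [show ((d : ℚ) / (n : ℚ)) = -(((-d : ℤ) : ℚ) / (n : ℚ)) by push_cast; ring,
    Int.ceil_neg, Rat.floor_intCast_div_natCast]

theorem ceil_sum_ge_2_5_7_9_13 (d : ℤ) (hd : 1 ≤ d) :
    d + 2 ≤ ⌈(d : ℚ) / 2⌉ + ⌈(d : ℚ) / 5⌉ + ⌈(d : ℚ) / 7⌉ + ⌈(d : ℚ) / 9⌉ + ⌈(d : ℚ) / 13⌉ := by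
  by_cases h : d ≤ 64
  · have h2 := ceil_div_nat_eq d 2
    have h5 := ceil_div_nat_eq d 5
    have h7 := ceil_div_nat_eq d 7
    have h9 := ceil_div_nat_eq d 9
    have h13 := ceil_div_nat_eq d 13
    norm_num at h2 h5 h7 h9 h13
    rw [h2, h5, h7, h9, h13]
    interval_cases d <;> decide
  · push_neg at h
    have hq : (65 : ℚ) ≤ (d : ℚ) := by exact_mod_cast h
    have c2 := Int.le_ceil ((d : ℚ) / 2)
    have c5 := Int.le_ceil ((d : ℚ) / 5)
    have c7 := Int.le_ceil ((d : ℚ) / 7)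
    have c9 := Int.le_ceil ((d : ℚ) / 9)
    have c13 := Int.le_ceil ((d : ℚ) / 13)
    have key : ((d : ℚ) + 2) ≤ (⌈(d : ℚ) / 2⌉ + ⌈(d : ℚ) / 5⌉ + ⌈(d : ℚ) / 7⌉ +
        ⌈(d : ℚ) / 9⌉ + ⌈(d : ℚ) / 13⌉ : ℤ) := by
      push_cast
      linarith
    exact_mod_cast key
end

section
/- The integer 34 is the least positive integer n such that ⌊(n+1)·(1/2)⌋ + ⌊(n+1)·(2/3)⌋ + ⌊(n+1)·(10/11)⌋ + ⌊(n+1)·(16/17)⌋ + ⌊(n+1)·(24/25)⌋ = 4n. In particular, for n = 34 the sum equals 136 = 4·34, and for every positive integer m < 34 the corresponding sum differs from 4m. -/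
theorem minimal_complement_index_14 :
    IsLeast {n : ℕ | 0 < n ∧
      ⌊((n : ℚ) + 1) * (1 / 2)⌋ + ⌊((n : ℚ) + 1) * (2 / 3)⌋ +
        ⌊((n : ℚ) + 1) * (10 / 11)⌋ + ⌊((n : ℚ) + 1) * (16 / 17)⌋ +
        ⌊((n : ℚ) + 1) * (24 / 25)⌋ = 4 * (n : ℤ)} 34 := by
  constructor
  · refine ⟨by norm_num, ?_⟩
    norm_num [Int.floor_eq_iff]
  · intro n hn
    obtain ⟨h0, h⟩ := hn
    by_contra hlt
    push_neg at hlt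
    interval_cases n <;> norm_num [Int.floor_eq_iff] at h
end

section
/- The integer 34 is the least positive integer n such that ⌊(n+1)·(1/2)⌋ + ⌊(n+1)·(2/3)⌋ + ⌊(n+1)·(10/11)⌋ + ⌊(n+1)·(16/17)⌋ + ⌊(n+1)·(28/29)⌋ = 4n. In particular, for n = 34 the sum equals 136 = 4·34, and for every positive integer m < 34 the corresponding sum differs from 4m. -/
theorem minimal_complement_index_15 :
    IsLeast {n : ℕ | 0 < n ∧
      ⌊((n : ℚ) + 1) * (1 / 2)⌋ + ⌊((n : ℚ) + 1) * (2 / 3)⌋ +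
        ⌊((n : ℚ) + 1) * (10 / 11)⌋ + ⌊((n : ℚ) + 1) * (16 / 17)⌋ +
        ⌊((n : ℚ) + 1) * (28 / 29)⌋ = 4 * (n : ℤ)} 34 := by
  constructor
  · refine ⟨by norm_num, ?_⟩
    norm_num [Int.floor_eq_iff]
  · rintro n ⟨hn, h⟩
    by_contra hlt
    push_neg at hlt
    interval_cases n <;> norm_num [Int.floor_eq_iff] at h
end

section
/- The integer 28 is the least positive integer n such that ⌊(n+1)·(1/2)⌋ + ⌊(n+1)·(4/5)⌋ + ⌊(n+1)·(6/7)⌋ + ⌊(n+1)·(8/9)⌋ + ⌊(n+1)·(12/13)⌋ = 4n. In particular, for n = 28 the sum equals 112 = 4·28, and for every positive integer m < 28 the corresponding sum differs from 4m. -/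
theorem minimal_complement_index_17 :
    IsLeast {n : ℕ | 0 < n ∧
      ⌊((n : ℚ) + 1) * (1 / 2)⌋ + ⌊((n : ℚ) + 1) * (4 / 5)⌋ +
        ⌊((n : ℚ) + 1) * (6 / 7)⌋ + ⌊((n : ℚ) + 1) * (8 / 9)⌋ +
        ⌊((n : ℚ) + 1) * (12 / 13)⌋ = 4 * (n : ℤ)} 28 := by
  constructor
  · refine ⟨by norm_num, ?_⟩
    norm_num
  · rintro n ⟨hn, h⟩
    by_contra hlt
    push_neg at hlt
    interval_cases n <;> norm_num at h
end
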